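/- Let X_1, …, X_{n+1} be exchangeable, almost surely pairwise distinct real-valued random variables, and for 1 ≤ k ≤ n let X_{(k)} denote the k-th smallest value among X_1, …, X_n. Then for every integer k with 1 ≤ k ≤ n, P(X_{n+1} ≤ X_{(k)}) = k/(n+1). -/

import Mathlib

open MeasureTheory ProbabilityTheory
open scoped ENNReal

/-- The `k`-th smallest value (1-indexed) among the values `f 0, …, f (n-1)`. -/
noncomputable def kthSmallest (n : ℕ) (f : Fin n → ℝ) (k : ℕ) : ℝ :=
  ((Multiset.map f (Finset.univ : Finset (Fin n)).val).sort (· ≤ ·)).getD (k - 1) 0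

lemma le_kthSmallest_iff {n : ℕ} (f : Fin n → ℝ) (x : ℝ) (k : ℕ)
    (hk1 : 1 ≤ k) (hkn : k ≤ n) :
    x ≤ kthSmallest n f k ↔ (Finset.univ.filter (fun i => f i < x)).card ≤ k - 1 := by
  classical
  set l := ((Multiset.map f (Finset.univ : Finset (Fin n)).val).sort (· ≤ ·)) with hl
  have hsort : l.Pairwise (· ≤ ·) := Multiset.pairwise_sort _ _
  have hlen : l.length = n := by
    rw [hl, Multiset.length_sort, Multiset.card_map]; simp
  have hklt : k - 1 < l.length := by omega
  have hget : kthSmallest n f k = l[k-1] := List.getD_eq_getElem l 0 hklt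
  have hcount : (Finset.univ.filter (fun i => f i < x)).card
      = l.countP (fun y => decide (y < x)) := by
    have h1 : Multiset.countP (fun y => y < x) (Multiset.map f Finset.univ.val)
        = (Finset.univ.filter (fun i => f i < x)).card := by
      rw [Multiset.countP_map]; rfl
    rw [← h1, ← Multiset.sort_eq (Multiset.map f Finset.univ.val) (· ≤ ·),
      Multiset.coe_countP]
  rw [hget, hcount]
  constructor
  · intro h
    have hsplit : l.countP (fun y => decide (y < x))
        = (l.take (k-1)).countP (fun y => decide (y < x))
          + (l.drop (k-1)).countP (fun y => decide (y < x)) := by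
      conv_lhs => rw [← List.take_append_drop (k-1) l]
      rw [List.countP_append]
    have hdrop : (l.drop (k-1)).countP (fun y => decide (y < x)) = 0 := by
      rw [List.countP_eq_zero]
      intro a ha
      obtain ⟨j, hj, rfl⟩ := List.getElem_of_mem ha
      rw [List.getElem_drop]
      simp only [decide_eq_true_eq, not_lt]
      refine le_trans h ?_
      exact hsort.rel_get_of_le (a := ⟨k-1, hklt⟩)
        (b := ⟨k-1+j, by rw [List.length_drop] at hj; omega⟩) (by simp)
    have htake : (l.take (k-1)).countP (fun y => decide (y < x)) ≤ k - 1 := by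
      calc (l.take (k-1)).countP (fun y => decide (y < x)) ≤ (l.take (k-1)).length :=
            List.countP_le_length
        _ ≤ k - 1 := by rw [List.length_take]; omega
    omega
  · intro h
    by_contra hc
    push_neg at hc
    have hkx : l[k-1] < x := hc
    have htake : (l.take k).countP (fun y => decide (y < x)) = (l.take k).length := by
      rw [List.countP_eq_length]
      intro a ha
      obtain ⟨j, hj, rfl⟩ := List.getElem_of_mem ha
      rw [List.getElem_take]
      simp only [decide_eq_true_eq]
      rw [List.length_take] at hj
      refine lt_of_le_of_lt ?_ hkx
      exact hsort.rel_get_of_le (a := ⟨j, by omega⟩) (b := ⟨k-1, hklt⟩) (by simp; omega)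
    have hsplit : l.countP (fun y => decide (y < x))
        = (l.take k).countP (fun y => decide (y < x))
          + (l.drop k).countP (fun y => decide (y < x)) := by
      conv_lhs => rw [← List.take_append_drop k l]
      rw [List.countP_append]
    have : (l.take k).length = k := by rw [List.length_take]; omega
    omega

section aux

open Finset

variable {N : ℕ}

/-- The "rank" of coordinate `i`: the number of coordinates whose value is smaller. -/
noncomputable def rankOf (f : Fin (N+1) → ℝ) (i : Fin (N+1)) : ℕ :=
  (Finset.univ.filter (fun m => f m < f i)).card

/-- The set of vectors where coordinate `i` has rank `j`. -/
noncomputable def rankSet (N : ℕ) (j : ℕ) (i : Fin (N+1)) : Set (Fin (N+1) → ℝ) :=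
  {f | rankOf f i = j}

lemma rank_lt (f : Fin (N+1) → ℝ) (i : Fin (N+1)) : rankOf f i < N + 1 := by
  have hsub : Finset.univ.filter (fun m => f m < f i) ⊆ Finset.univ.erase i := by
    intro m hm
    simp only [Finset.mem_filter] at hm
    refine Finset.mem_erase.2 ⟨?_, Finset.mem_univ _⟩
    rintro rfl; exact lt_irrefl _ hm.2
  calc rankOf f i ≤ (Finset.univ.erase i).card := Finset.card_le_card hsub
    _ < N + 1 := by
        rw [Finset.card_erase_of_mem (Finset.mem_univ i), Finset.card_univ]
        simp

lemma rank_injective {f : Fin (N+1) → ℝ} (hf : Function.Injective f) :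
    Function.Injective (rankOf f) := by
  have hsub : ∀ a b : Fin (N+1), f a < f b → rankOf f a < rankOf f b := by
    intro a b hab
    apply Finset.card_lt_card
    constructor
    · intro m hm
      simp only [Finset.mem_filter] at hm ⊢
      exact ⟨hm.1, hm.2.trans hab⟩
    · intro hc
      have h1 : a ∈ Finset.univ.filter (fun m => f m < f b) := by simp [hab]
      have := hc h1
      simp at this
  intro i j h
  by_contra hne
  have hfne : f i ≠ f j := fun e => hne (hf e)
  rcases lt_or_gt_of_ne hfne with hlt | hlt
  · exact absurd h (Nat.ne_of_lt (hsub i j hlt))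
  · exact absurd h.symm (Nat.ne_of_lt (hsub j i hlt))

lemma card_filter_comp_perm (σ : Equiv.Perm (Fin (N+1))) (p : Fin (N+1) → Prop)
    [DecidablePred p] :
    (Finset.univ.filter (fun m => p (σ m))).card = (Finset.univ.filter p).card := by
  apply Finset.card_bij (fun m _ => σ m)
  · intro a ha; simp only [Finset.mem_filter, Finset.mem_univ, true_and] at ha ⊢; exact ha
  · intro a _ b _ h; exact σ.injective h
  · intro b hb
    refine ⟨σ.symm b, ?_, by simp⟩
    simp only [Finset.mem_filter, Finset.mem_univ, true_and] at hb ⊢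
    simpa using hb

lemma rankOf_measurable (i : Fin (N+1)) : Measurable (fun f : Fin (N+1) → ℝ => rankOf f i) := by
  classical
  unfold rankOf
  simp_rw [Finset.card_filter]
  apply Finset.measurable_sum
  intro m _
  exact Measurable.ite
    (measurableSet_lt (measurable_pi_apply m) (measurable_pi_apply i))
    measurable_const measurable_const

lemma rankSet_measurable (j : ℕ) (i : Fin (N+1)) : MeasurableSet (rankSet N j i) :=
  rankOf_measurable i (measurableSet_singleton j)

/-- The rank of the last coordinate equals the count over the first `N` coordinates. -/
lemma rankOf_last (f : Fin (N+1) → ℝ) :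
    rankOf f (Fin.last N)
      = (Finset.univ.filter (fun i : Fin N => f i.castSucc < f (Fin.last N))).card := by
  unfold rankOf
  symm
  apply Finset.card_bij (fun (i : Fin N) _ => i.castSucc)
  · intro a ha
    simp only [Finset.mem_filter, Finset.mem_univ, true_and] at ha ⊢
    exact ha
  · intro a _ b _ h; exact Fin.castSucc_injective N h
  · intro m hm
    simp only [Finset.mem_filter, Finset.mem_univ, true_and] at hm
    have hne : m ≠ Fin.last N := by rintro rfl; exact lt_irrefl _ hm
    obtain ⟨i, rfl⟩ := Fin.exists_castSucc_eq.2 hne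
    exact ⟨i, by simp only [Finset.mem_filter, Finset.mem_univ, true_and]; exact hm, rfl⟩

end aux

/-- If `X 0, …, X n` are exchangeable, almost surely pairwise distinct
real-valued random variables and `X_{(k)}` denotes the `k`-th smallest among the first `n`
of them, then for every `1 ≤ k ≤ n`, `P(X_{n+1} ≤ X_{(k)}) = k / (n + 1)`. -/
theorem prob_last_le_kth_order_stat
    {Ω : Type*} [MeasurableSpace Ω] (μ : Measure Ω) [IsProbabilityMeasure μ]
    (n : ℕ) (X : Fin (n + 1) → Ω → ℝ) (hmeas : ∀ i, Measurable (X i))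
    (hexch : ∀ σ : Equiv.Perm (Fin (n + 1)),
      Measure.map (fun ω => fun i => X (σ i) ω) μ = Measure.map (fun ω => fun i => X i ω) μ)
    (hdist : ∀ i j, i ≠ j → μ {ω | X i ω = X j ω} = 0)
    (k : ℕ) (hk1 : 1 ≤ k) (hkn : k ≤ n) :
    μ {ω | X (Fin.last n) ω ≤ kthSmallest n (fun i : Fin n => X i.castSucc ω) k}
      = k / (n + 1) := by
  classical
  set V : Ω → (Fin (n+1) → ℝ) := fun ω i => X i ω with hVdef
  have hV : Measurable V := measurable_pi_lambda _ hmeas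
  -- exchangeability transported to preimages
  have hmap : ∀ (σ : Equiv.Perm (Fin (n+1))) (A : Set (Fin (n+1) → ℝ)), MeasurableSet A →
      μ (V ⁻¹' ((fun f : Fin (n+1) → ℝ => fun m => f (σ m)) ⁻¹' A)) = μ (V ⁻¹' A) := by
    intro σ A hA
    have hm : Measurable (fun f : Fin (n+1) → ℝ => fun m => f (σ m)) :=
      measurable_pi_lambda _ (fun m => measurable_pi_apply _)
    have h2 : (fun ω => fun i => X (σ i) ω) = (fun f : Fin (n+1) → ℝ => fun m => f (σ m)) ∘ V :=
      rfl
    have hx := hexch σ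
    rw [h2] at hx
    calc μ (V ⁻¹' ((fun f : Fin (n+1) → ℝ => fun m => f (σ m)) ⁻¹' A))
        = Measure.map ((fun f : Fin (n+1) → ℝ => fun m => f (σ m)) ∘ V) μ A := by
          rw [Measure.map_apply (hm.comp hV) hA, Set.preimage_comp]
      _ = Measure.map V μ A := by rw [hx]
      _ = μ (V ⁻¹' A) := Measure.map_apply hV hA
  -- all coordinates are equally likely to have rank j
  have hSwap : ∀ (i : Fin (n+1)) (j : ℕ),
      μ (V ⁻¹' rankSet n j i) = μ (V ⁻¹' rankSet n j (Fin.last n)) := by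
    intro i j
    have hset : ((fun f : Fin (n+1) → ℝ => fun m => f ((Equiv.swap i (Fin.last n)) m)) ⁻¹'
        rankSet n j (Fin.last n)) = rankSet n j i := by
      ext f
      simp only [Set.mem_preimage, rankSet, rankOf, Set.mem_setOf_eq]
      simp only [Equiv.swap_apply_right]
      rw [card_filter_comp_perm (Equiv.swap i (Fin.last n)) (fun m => f m < f i)]
    have h := hmap (Equiv.swap i (Fin.last n)) (rankSet n j (Fin.last n))
      (rankSet_measurable j _)
    rw [hset] at h
    exact h
  -- the null set of coincidences
  set Nbad : Set Ω := ⋃ (i : Fin (n+1)) (j : Fin (n+1)) (_ : i ≠ j), {ω | X i ω = X j ω}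
    with hNbadDef
  have hNbadMeas : MeasurableSet Nbad := by
    apply MeasurableSet.iUnion; intro i
    apply MeasurableSet.iUnion; intro j
    apply MeasurableSet.iUnion; intro hij
    exact measurableSet_eq_fun (hmeas i) (hmeas j)
  have hNbad0 : μ Nbad = 0 := by
    apply measure_iUnion_null; intro i
    apply measure_iUnion_null; intro j
    apply measure_iUnion_null; intro hij
    exact hdist i j hij
  have hGinj : ∀ ω, ω ∉ Nbad → Function.Injective (V ω) := by
    intro ω hω i j hij
    by_contra hne
    exact hω (by simpa only [hNbadDef, Set.mem_iUnion] using ⟨i, j, hne, hij⟩)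
  have hGfull : μ Nbadᶜ = 1 := by
    rw [measure_compl hNbadMeas (measure_ne_top μ _), hNbad0, measure_univ, tsub_zero]
  -- each rank value j ≤ n has probability 1/(n+1) for the last coordinate
  have hone : ∀ j : ℕ, j ≤ n →
      μ (V ⁻¹' rankSet n j (Fin.last n)) = ((n : ℝ≥0∞) + 1)⁻¹ := by
    intro j hj
    set A : Fin (n+1) → Set Ω := fun i => V ⁻¹' rankSet n j i ∩ Nbadᶜ with hAdef
    have hAmeas : ∀ i, MeasurableSet (A i) := fun i =>
      (hV (rankSet_measurable j i)).inter hNbadMeas.compl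
    have hdisj : Pairwise (Function.onFun Disjoint A) := by
      intro i i' hii'
      rw [Function.onFun, Set.disjoint_left]
      intro ω hωi hωi'
      have hinj : Function.Injective (V ω) := hGinj ω hωi.2
      exact hii' (rank_injective hinj (hωi.1.trans hωi'.1.symm))
    have hcover : (⋃ i, A i) = Nbadᶜ := by
      apply Set.Subset.antisymm
      · exact Set.iUnion_subset fun i => Set.inter_subset_right
      · intro ω hω
        have hinj : Function.Injective (V ω) := hGinj ω hω
        have hrinj : Function.Injective (fun i => (⟨rankOf (V ω) i, rank_lt _ i⟩ : Fin (n+1))) := by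
          intro a b hab
          exact rank_injective hinj (congrArg Fin.val hab)
        have hrsurj := Finite.surjective_of_injective hrinj
        obtain ⟨i, hi⟩ := hrsurj ⟨j, by omega⟩
        refine Set.mem_iUnion.2 ⟨i, ⟨?_, hω⟩⟩
        simpa [rankSet] using congrArg Fin.val hi
    have hAe : ∀ i, μ (A i) = μ (V ⁻¹' rankSet n j (Fin.last n)) := by
      intro i
      rw [hAdef]
      simp only
      rw [measure_inter_conull (by simpa using hNbad0), hSwap i j]
    have hsum : ∑ i : Fin (n+1), μ (A i) = 1 := by
      rw [← tsum_fintype (L := SummationFilter.unconditional _), ← measure_iUnion hdisj hAmeas, hcover, hGfull]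
    rw [Finset.sum_congr rfl (fun i _ => hAe i), Finset.sum_const, Finset.card_univ,
      Fintype.card_fin, nsmul_eq_mul] at hsum
    push_cast at hsum
    have hne0 : ((n : ℝ≥0∞) + 1) ≠ 0 := by simp
    have hnetop : ((n : ℝ≥0∞) + 1) ≠ ⊤ := by simp
    calc μ (V ⁻¹' rankSet n j (Fin.last n))
        = (((n : ℝ≥0∞) + 1)⁻¹ * ((n : ℝ≥0∞) + 1)) * μ (V ⁻¹' rankSet n j (Fin.last n)) := by
          rw [ENNReal.inv_mul_cancel hne0 hnetop, one_mul]
      _ = ((n : ℝ≥0∞) + 1)⁻¹ * (((n : ℝ≥0∞) + 1) * μ (V ⁻¹' rankSet n j (Fin.last n))) := by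
          rw [mul_assoc]
      _ = ((n : ℝ≥0∞) + 1)⁻¹ := by rw [hsum, mul_one]
  -- the target event is the union of the rank events for j < k
  have htarget : {ω | X (Fin.last n) ω ≤ kthSmallest n (fun i : Fin n => X i.castSucc ω) k}
      = ⋃ j ∈ Finset.range k, V ⁻¹' rankSet n j (Fin.last n) := by
    ext ω
    simp only [Set.mem_setOf_eq, Set.mem_iUnion, Set.mem_preimage, rankSet,
      Finset.mem_range, Set.mem_setOf_eq]
    rw [le_kthSmallest_iff _ _ k hk1 hkn, ← rankOf_last (V ω)]
    constructor
    · intro h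
      exact ⟨rankOf (V ω) (Fin.last n), by omega, rfl⟩
    · rintro ⟨j, hjk, hj⟩
      omega
  have hd : Set.PairwiseDisjoint (↑(Finset.range k))
      (fun j => V ⁻¹' rankSet n j (Fin.last n)) := by
    intro j _ j' _ hjj'
    rw [Function.onFun, Set.disjoint_left]
    intro ω hω hω'
    simp only [Set.mem_preimage, rankSet, Set.mem_setOf_eq] at hω hω'
    exact hjj' (hω.symm.trans hω')
  rw [htarget, measure_biUnion_finset hd (fun j _ => hV (rankSet_measurable j _))]
  rw [Finset.sum_congr rfl (fun j hj => hone j (by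
    simp only [Finset.mem_range] at hj; omega))]
  rw [Finset.sum_const, Finset.card_range, nsmul_eq_mul, div_eq_mul_inv]
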